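/- Let φ : M → M' be a surjective homomorphism of modules over a commutative ring R, and let D(M') and D(M) be the sets of all proper submodules of M' and M, respectively, with their structure-space topologies. The map φ_! : D(M') → D(M), N ↦ φ⁻¹(N), is a homeomorphism of D(M') onto the closed subspace C(ker φ) = {L ∈ D(M) : ker φ ⊆ L} of D(M). -/

import Mathlib

open TopologicalSpace

/-- The structure-space topology on a set `D` of submodules: generated by the
closed subbasis `C(N) = {L ∈ D | N ≤ L}`, i.e. by the open subbasis of their complements. -/
def structTop (R M : Type*) [CommRing R] [AddCommGroup M] [Module R M]
    (D : Set (Submodule R M)) : TopologicalSpace D :=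
  TopologicalSpace.generateFrom
    {U : Set D | ∃ N : Submodule R M, U = {L : D | ¬ N ≤ L.1}}

theorem stmt_19 {R M M' : Type*} [CommRing R] [AddCommGroup M] [Module R M]
    [AddCommGroup M'] [Module R M']
    (φ : M →ₗ[R] M') (hφ : Function.Surjective φ) :
    letI : TopologicalSpace {L : Submodule R M | L ≠ ⊤} :=
      structTop R M {L : Submodule R M | L ≠ ⊤}
    letI : TopologicalSpace {L : Submodule R M' | L ≠ ⊤} :=
      structTop R M' {L : Submodule R M' | L ≠ ⊤}
    IsClosed {L : {L : Submodule R M | L ≠ ⊤} | LinearMap.ker φ ≤ L.1} ∧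
    ∃ e : {L : Submodule R M' | L ≠ ⊤} ≃ₜ
        {L : {L : Submodule R M | L ≠ ⊤} | LinearMap.ker φ ≤ L.1},
      ∀ N : {L : Submodule R M' | L ≠ ⊤},
        ((e N).1 : Submodule R M) = Submodule.comap φ N.1 := by
  letI t1 : TopologicalSpace {L : Submodule R M | L ≠ ⊤} :=
    structTop R M {L : Submodule R M | L ≠ ⊤}
  letI t2 : TopologicalSpace {L : Submodule R M' | L ≠ ⊤} :=
    structTop R M' {L : Submodule R M' | L ≠ ⊤}
  have hrange : LinearMap.range φ = ⊤ := LinearMap.range_eq_top.mpr hφ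
  -- comap of proper is proper
  have hcomap_ne : ∀ N : Submodule R M', N ≠ ⊤ → Submodule.comap φ N ≠ ⊤ := by
    intro N hN h
    apply hN
    have : Submodule.map φ (Submodule.comap φ N) = N := by
      rw [Submodule.map_comap_eq, hrange, top_inf_eq]
    rw [← this, h, Submodule.map_top, hrange]
  -- comap_map for L containing ker
  have hcm : ∀ L : Submodule R M, LinearMap.ker φ ≤ L →
      Submodule.comap φ (Submodule.map φ L) = L := by
    intro L hL
    rw [Submodule.comap_map_eq, sup_eq_left.mpr hL]
  have hmap_ne : ∀ L : Submodule R M, L ≠ ⊤ → LinearMap.ker φ ≤ L →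
      Submodule.map φ L ≠ ⊤ := by
    intro L hL hker h
    apply hL
    rw [← hcm L hker, h, Submodule.comap_top]
  -- key order equivalence
  have hkey : ∀ (P : Submodule R M') (L : Submodule R M), LinearMap.ker φ ≤ L →
      (P ≤ Submodule.map φ L ↔ Submodule.comap φ P ≤ L) := by
    intro P L hker
    constructor
    · intro h
      have := Submodule.comap_mono (f := φ) h
      rwa [hcm L hker] at this
    · intro h
      have := Submodule.map_mono (f := φ) h
      rwa [Submodule.map_comap_eq, hrange, top_inf_eq] at this
  refine ⟨?_, ?_⟩
  · rw [← isOpen_compl_iff]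
    have : {L : {L : Submodule R M | L ≠ ⊤} | LinearMap.ker φ ≤ L.1}ᶜ
        = {L : {L : Submodule R M | L ≠ ⊤} | ¬ LinearMap.ker φ ≤ L.1} := rfl
    rw [this]
    exact TopologicalSpace.GenerateOpen.basic _ ⟨LinearMap.ker φ, rfl⟩
  · -- the equiv
    refine ⟨⟨⟨fun N => ⟨⟨Submodule.comap φ N.1, hcomap_ne N.1 N.2⟩,
        fun x hx => by simpa using (Submodule.mem_comap.mpr
          (by rw [show φ x = 0 from hx]; exact N.1.zero_mem))⟩,
      fun L => ⟨Submodule.map φ L.1.1, hmap_ne L.1.1 L.1.2 L.2⟩,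
      ?_, ?_⟩, ?_, ?_⟩, fun N => rfl⟩
    · intro N
      apply Subtype.ext
      show Submodule.map φ (Submodule.comap φ N.1) = N.1
      rw [Submodule.map_comap_eq, hrange, top_inf_eq]
    · intro L
      apply Subtype.ext; apply Subtype.ext
      exact hcm L.1.1 L.2
    · -- continuity of forward map
      apply Continuous.subtype_mk
      unfold structTop
      rw [continuous_generateFrom_iff]
      rintro U ⟨N₀, rfl⟩
      have : (fun N : {L : Submodule R M' | L ≠ ⊤} =>
          (⟨Submodule.comap φ N.1, hcomap_ne N.1 N.2⟩ : {L : Submodule R M | L ≠ ⊤})) ⁻¹'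
            {L : {L : Submodule R M | L ≠ ⊤} | ¬ N₀ ≤ L.1}
          = {N : {L : Submodule R M' | L ≠ ⊤} | ¬ Submodule.map φ N₀ ≤ N.1} := by
        ext N
        show ¬ N₀ ≤ Submodule.comap φ N.1 ↔ ¬ Submodule.map φ N₀ ≤ N.1
        rw [Submodule.map_le_iff_le_comap]
      rw [this]
      exact TopologicalSpace.GenerateOpen.basic _ ⟨Submodule.map φ N₀, rfl⟩
    · -- continuity of inverse map
      unfold structTop
      rw [continuous_generateFrom_iff]
      rintro U ⟨P, rfl⟩
      have : (fun L : {L : {L : Submodule R M | L ≠ ⊤} | LinearMap.ker φ ≤ L.1} =>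
          (⟨Submodule.map φ L.1.1, hmap_ne L.1.1 L.1.2 L.2⟩ :
            {L : Submodule R M' | L ≠ ⊤})) ⁻¹'
            {N : {L : Submodule R M' | L ≠ ⊤} | ¬ P ≤ N.1}
          = Subtype.val ⁻¹'
            {L : {L : Submodule R M | L ≠ ⊤} | ¬ Submodule.comap φ P ≤ L.1} := by
        ext L
        show ¬ P ≤ Submodule.map φ L.1.1 ↔ ¬ Submodule.comap φ P ≤ L.1.1
        rw [hkey P L.1.1 L.2]
      rw [this]
      exact continuous_subtype_val.isOpen_preimage _
        (TopologicalSpace.GenerateOpen.basic _ ⟨Submodule.comap φ P, rfl⟩)
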